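/- The only rational points on the affine curve y² = 2x⁶ + 2 are (1, 2), (1, −2), (−1, 2), and (−1, −2). That is, for rational numbers x and y, the equation y² = 2x⁶ + 2 holds if and only if x ∈ {1, −1} and y ∈ {2, −2}. -/

import Mathlib

private lemma coprime_no_prime {a b : ℤ} (h : IsCoprime a b) {p : ℕ} (hp : p.Prime)
    (ha : (p:ℤ) ∣ a) (hb : (p:ℤ) ∣ b) : False := by
  have hu := h.isUnit_of_dvd' ha hb
  rw [Int.isUnit_iff] at hu
  rcases hu with h1 | h1
  · have : p = 1 := by exact_mod_cast h1
    exact hp.one_lt.ne' this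
  · have : (0:ℤ) ≤ p := Int.natCast_nonneg p
    omega

private lemma no_prime_divisor_coprime {a b : ℤ}
    (h : ∀ p : ℕ, p.Prime → (p:ℤ) ∣ a → (p:ℤ) ∣ b → False) : IsCoprime a b := by
  rw [Int.isCoprime_iff_gcd_eq_one]
  by_contra hg
  obtain ⟨p, hp, hpd⟩ := Nat.exists_prime_and_dvd hg
  have hpz : (p:ℤ) ∣ (Int.gcd a b : ℤ) := Int.natCast_dvd_natCast.mpr hpd
  exact h p hp (hpz.trans (Int.gcd_dvd_left a b)) (hpz.trans (Int.gcd_dvd_right a b))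

private lemma sq_of_coprime_pos {a b c : ℤ} (h : IsCoprime a b) (heq : a * b = c ^ 2)
    (ha : 0 ≤ a) : ∃ d : ℤ, 0 ≤ d ∧ a = d ^ 2 := by
  obtain ⟨d, hd | hd⟩ := Int.sq_of_isCoprime h heq
  · exact ⟨|d|, abs_nonneg d, by rw [hd, sq_abs]⟩
  · have h1 : 0 ≤ d ^ 2 := sq_nonneg d
    exact ⟨0, le_rfl, by omega⟩

private lemma pow4_of_coprime {a b c : ℤ} (h : IsCoprime a b) (heq : a * b = c ^ 4)
    (ha : 0 ≤ a) : ∃ d : ℤ, 0 ≤ d ∧ a = d ^ 4 := by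
  obtain ⟨d, u, hu⟩ := exists_associated_pow_of_mul_eq_pow' h heq
  have h4 : (0:ℤ) ≤ d ^ 4 := by positivity
  rcases Int.units_eq_one_or u with rfl | rfl
  · refine ⟨|d|, abs_nonneg d, ?_⟩
    have habs : |d| ^ 4 = |d ^ 4| := pow_abs d 4
    rw [habs, abs_of_nonneg h4, ← hu]; simp
  · have : a = -(d^4) := by rw [← hu]; simp
    exact ⟨0, le_rfl, by omega⟩

private lemma coprime_of_pow {a b : ℤ} {m n : ℕ} (hm : m ≠ 0) (hn : n ≠ 0)
    (h : IsCoprime (a^m) (b^n)) : IsCoprime a b :=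
  (h.of_isCoprime_of_dvd_left (dvd_pow_self a hm)).of_isCoprime_of_dvd_right
    (dvd_pow_self b hn)

private lemma even_sq_of_even {a : ℤ} (h : Even a) : Even (a^2) := by
  obtain ⟨r, rfl⟩ := h; exact ⟨2*r^2, by ring⟩

private lemma odd_of_odd_sq {a : ℤ} (h : Odd (a^2)) : Odd a := by
  rcases Int.even_or_odd a with he | ho
  · exfalso
    obtain ⟨r, rfl⟩ := he
    exact (Int.not_odd_iff_even.mpr ⟨2*r^2, by ring⟩) h
  · exact ho


private lemma pos_of_mul_pos_left' {a b : ℤ} (h : 0 < a * b) (ha : 0 < a) : 0 < b := by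
  rcases lt_trichotomy b 0 with hb | hb | hb
  · exfalso
    have : a * b < 0 := mul_neg_of_pos_of_neg ha hb
    linarith
  · exfalso; rw [hb, mul_zero] at h; exact lt_irrefl 0 h
  · exact hb

private lemma pos_pair_of_mul_sum {a b : ℤ} (hp : 0 < a * b) (hs : 0 < a + b) :
    0 < a ∧ 0 < b := by
  rcases lt_trichotomy a 0 with ha | ha | ha
  · exfalso
    have hb : 0 < b := by linarith
    have : a * b < 0 := mul_neg_of_neg_of_pos ha hb
    linarith
  · exfalso; rw [ha, zero_mul] at hp; exact lt_irrefl 0 hp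
  · exact ⟨ha, pos_of_mul_pos_left' hp ha⟩

set_option maxHeartbeats 1000000 in
private lemma mixed_descent {x y w : ℤ} (hco : IsCoprime x y)
    (heq : x^4 - x^2*y^2 + y^4 = w^2)
    (hox : Odd x) (hey : Even y) (hx : x ≠ 0) (hy : y ≠ 0) (hw : 0 < w) :
    ∃ P Q v : ℤ, IsCoprime P Q ∧ P^4 - P^2*Q^2 + Q^4 = v^2 ∧ P ≠ 0 ∧ Q ≠ 0 ∧ P^2 ≠ Q^2 ∧
      v.natAbs < w.natAbs := by
  obtain ⟨c, rfl⟩ : ∃ c, y = 2*c := by obtain ⟨c, hc⟩ := hey; exact ⟨c, by omega⟩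
  have hc0 : c ≠ 0 := by intro h; apply hy; rw [h]; ring
  -- w is odd
  have how : Odd w := by
    apply odd_of_odd_sq
    rw [← heq]
    have he1 : Even ((2*c)^2) := ⟨2*c^2, by ring⟩
    exact ((hox.pow).sub_even (he1.mul_left (x^2))).add_even ⟨8*c^4, by ring⟩
  -- s = x^2 - 2c^2 is odd
  have hs_odd : Odd (x^2 - 2*c^2) := (hox.pow).sub_even ⟨c^2, by ring⟩
  obtain ⟨α, hα⟩ : ∃ α, w - (x^2 - 2*c^2) = 2*α := by
    obtain ⟨r, hr⟩ := how.sub_odd hs_odd; exact ⟨r, by omega⟩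
  obtain ⟨β, hβ⟩ : ∃ β, w + (x^2 - 2*c^2) = 2*β := by
    obtain ⟨r, hr⟩ := how.add_odd hs_odd; exact ⟨r, by omega⟩
  have hsum : α + β = w := by
    have h2 : 2*(α + β) = 2*w := by linear_combination -hα - hβ
    linarith
  have hdiff : x^2 - 2*c^2 = β - α := by
    have h2 : 2*(β - α) = 2*(x^2 - 2*c^2) := by linear_combination hα - hβ
    linarith
  have hprod : α * β = 3 * c^4 := by
    have h4 : (2*α) * (2*β) = 4*(3*c^4) := by
      rw [← hα, ← hβ]; linear_combination -heq
    have h4' : (4:ℤ) * (α*β) = 4 * (3*c^4) := by linear_combination h4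
    exact mul_left_cancel₀ (by norm_num) h4'
  have hc4pos : (0:ℤ) < 3*c^4 := by positivity
  obtain ⟨hαpos, hβpos⟩ : 0 < α ∧ 0 < β := by
    apply pos_pair_of_mul_sum
    · rw [hprod]; exact hc4pos
    · rw [hsum]; exact hw
  -- 3 does not divide w
  have hw3 : ¬ (3:ℤ) ∣ w := by
    intro h3
    have h0 : ((w : ZMod 3)) = 0 := by
      exact_mod_cast (ZMod.intCast_zmod_eq_zero_iff_dvd w 3).mpr h3
    have hE := congrArg (fun t : ℤ => (t : ZMod 3)) heq
    push_cast at hE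
    rw [h0] at hE
    have key : ∀ a b : ZMod 3, a^4 - a^2*(2*b)^2 + (2*b)^4 = 0^2 → a = 0 ∧ b = 0 := by decide
    obtain ⟨hx3, hc3⟩ := key (x : ZMod 3) (c : ZMod 3) (by push_cast at hE ⊢; linear_combination hE)
    have hdx : (3:ℤ) ∣ x := by exact_mod_cast (ZMod.intCast_zmod_eq_zero_iff_dvd x 3).mp hx3
    have hdc : (3:ℤ) ∣ c := by exact_mod_cast (ZMod.intCast_zmod_eq_zero_iff_dvd c 3).mp hc3
    exact coprime_no_prime hco (by norm_num : Nat.Prime 3) (by exact_mod_cast hdx)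
      (by push_cast; exact hdc.mul_left 2)
  -- α and β are coprime
  have hcαβ : IsCoprime α β := by
    apply no_prime_divisor_coprime
    intro p hp hpα hpβ
    have hpw : (p:ℤ) ∣ w := hsum ▸ dvd_add hpα hpβ
    have hps : (p:ℤ) ∣ (x^2 - 2*c^2) := hdiff ▸ dvd_sub hpβ hpα
    have hp2 : p ≠ 2 := by
      rintro rfl
      exact (Int.not_odd_iff_even.mpr (even_iff_two_dvd.mpr (by exact_mod_cast hpw))) how
    have hpZ : Prime (p:ℤ) := Int.prime_iff_natAbs_prime.mpr (by simpa using hp)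
    have h12 : (p:ℤ) ∣ 12 * c^4 := by
      have hid : w^2 - (x^2 - 2*c^2)^2 = 12*c^4 := by linear_combination -heq
      exact hid ▸ dvd_sub ((hpw.pow two_ne_zero)) ((hps.pow two_ne_zero))
    rcases hpZ.dvd_mul.mp h12 with h1 | h1
    · -- p ∣ 12, p ≠ 2 prime ⇒ p = 3, contradicting hw3
      have hp12 : (p:ℕ) ∣ 12 := by exact_mod_cast h1
      have hp3 : p = 3 := by
        have h43 : p ∣ 4 * 3 := by norm_num; exact_mod_cast hp12
        rcases (Nat.Prime.dvd_mul hp).mp h43 with h4 | h3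
        · exact absurd ((Nat.prime_dvd_prime_iff_eq hp Nat.prime_two).mp
            (hp.dvd_of_dvd_pow (show p ∣ 2^2 by norm_num; exact h4))) hp2
        · exact (Nat.prime_dvd_prime_iff_eq hp Nat.prime_three).mp h3
      rw [hp3] at hpw
      exact hw3 (by exact_mod_cast hpw)
    · have hpc : (p:ℤ) ∣ c := hpZ.dvd_of_dvd_pow h1
      have hpx2 : (p:ℤ) ∣ x^2 := by
        have : x^2 = (x^2 - 2*c^2) + 2*c^2 := by ring
        rw [this]
        exact dvd_add hps ((hpc.pow two_ne_zero).mul_left 2)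
      exact coprime_no_prime hco hp (hpZ.dvd_of_dvd_pow hpx2) (hpc.mul_left 2)
  have h3αβ : (3:ℤ) ∣ α * β := ⟨c^4, hprod⟩
  rcases (Int.prime_three.dvd_mul.mp h3αβ) with h3α | h3β
  · -- Branch: 3 ∣ α ; produces the smaller solution
    obtain ⟨α', rfl⟩ := h3α
    have hprod' : α' * β = c^4 := by
      have h3' : (3:ℤ) * (α' * β) = 3 * c^4 := by linear_combination hprod
      exact mul_left_cancel₀ (by norm_num) h3'
    have hcop' : IsCoprime α' β := hcαβ.of_isCoprime_of_dvd_left ⟨3, by ring⟩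
    have hα'pos : 0 < α' := by linarith
    obtain ⟨u, hu0, hu⟩ := pow4_of_coprime hcop' hprod' hα'pos.le
    obtain ⟨v, hv0, hv⟩ := pow4_of_coprime hcop'.symm
      (by rw [mul_comm]; exact hprod') hβpos.le
    have hune : u ≠ 0 := by intro h; rw [h] at hu; simp at hu; omega
    have hvne : v ≠ 0 := by intro h; rw [h] at hv; simp at hv; omega
    have hcopuv : IsCoprime u v := by
      apply coprime_of_pow (m := 4) (n := 4) (by norm_num) (by norm_num)
      rw [← hu, ← hv]; exact hcop'
    have hc2 : c^2 = u^2 * v^2 := by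
      have h44 : (u^2*v^2)^2 = (c^2)^2 := by
        rw [hu, hv] at hprod'; linear_combination hprod'
      rcases eq_or_eq_neg_of_sq_eq_sq _ _ h44 with h | h
      · exact h.symm
      · exfalso
        have h1 : (0:ℤ) ≤ u^2*v^2 := by positivity
        have h2 : (0:ℤ) < c^2 := by positivity
        linarith
    have hsfact : x^2 = (v^2 + 3*u^2) * (v^2 - u^2) := by
      linear_combination hdiff + hv - 3*hu + 2*hc2
    have hoddx2 : Odd (x^2) := hox.pow
    have hodd_fact : Odd (v^2 + 3*u^2) ∧ Odd (v^2 - u^2) := by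
      rw [hsfact] at hoddx2
      exact (Int.odd_mul.mp hoddx2)
    have hcopf : IsCoprime (v^2 - u^2) (v^2 + 3*u^2) := by
      apply no_prime_divisor_coprime
      intro p hp hp1 hp2
      have hpZ : Prime (p:ℤ) := Int.prime_iff_natAbs_prime.mpr (by simpa using hp)
      have hp4u : (p:ℤ) ∣ 4*u^2 := by
        have : (4:ℤ)*u^2 = (v^2 + 3*u^2) - (v^2 - u^2) := by ring
        rw [this]; exact dvd_sub hp2 hp1
      have hpne2 : p ≠ 2 := by
        rintro rfl
        exact (Int.not_odd_iff_even.mpr (even_iff_two_dvd.mpr (by exact_mod_cast hp1)))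
          hodd_fact.2
      have hpu : (p:ℤ) ∣ u := by
        rcases hpZ.dvd_mul.mp hp4u with h | h
        · exfalso
          have : (p:ℤ) ∣ 2 := hpZ.dvd_of_dvd_pow (show (p:ℤ) ∣ 2^2 by norm_num; exact h)
          have hple : (p:ℤ) ≤ 2 := Int.le_of_dvd (by norm_num) this
          have hpge := hp.two_le
          have : p = 2 := by omega
          exact hpne2 this
        · exact hpZ.dvd_of_dvd_pow h
      have hpv : (p:ℤ) ∣ v := by
        apply hpZ.dvd_of_dvd_pow (n := 2)
        have : v^2 = (v^2 - u^2) + u^2 := by ring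
        rw [this]; exact dvd_add hp1 (hpu.pow two_ne_zero)
      exact coprime_no_prime hcopuv hp hpu hpv
    have hx2pos : (0:ℤ) < x^2 := by positivity
    have hf1 : (0:ℤ) < v^2 + 3*u^2 := by positivity
    have hf2 : (0:ℤ) < v^2 - u^2 := by
      apply pos_of_mul_pos_left' _ hf1
      rw [← hsfact]; exact hx2pos
    obtain ⟨g, hg0, hg⟩ := sq_of_coprime_pos hcopf
      (by rw [mul_comm]; exact hsfact.symm) hf2.le
    obtain ⟨h, hh0, hh⟩ := sq_of_coprime_pos hcopf.symm hsfact.symm hf1.le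
    have hgodd : Odd g := odd_of_odd_sq (hg ▸ hodd_fact.2)
    have hhodd : Odd h := odd_of_odd_sq (hh ▸ hodd_fact.1)
    obtain ⟨pp, hpp⟩ : ∃ pp, h + g = 2*pp := by
      obtain ⟨r, hr⟩ := hhodd.add_odd hgodd; exact ⟨r, by omega⟩
    obtain ⟨qq, hqq⟩ : ∃ qq, h - g = 2*qq := by
      obtain ⟨r, hr⟩ := hhodd.sub_odd hgodd; exact ⟨r, by omega⟩
    have hsum2 : pp + qq = h := by
      have : 2*(pp + qq) = 2*h := by linear_combination -hpp - hqq
      linarith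
    have hdiff2 : pp - qq = g := by
      have : 2*(pp - qq) = 2*g := by linear_combination hqq - hpp
      linarith
    have hpqprod : pp * qq = u^2 := by
      have h4 : (2*pp)*(2*qq) = 4*u^2 := by
        rw [← hpp, ← hqq]; linear_combination hg - hh
      have h4' : (4:ℤ)*(pp*qq) = 4*u^2 := by linear_combination h4
      exact mul_left_cancel₀ (by norm_num) h4'
    have hgne : g ≠ 0 := by intro hgz; rw [hgz] at hgodd; exact (by decide : ¬ Odd (0:ℤ)) hgodd
    have hhpos : 0 < h := by
      rcases hh0.lt_or_eq with h' | h'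
      · exact h'
      · exfalso; rw [← h'] at hh; simp at hh; linarith [hf1]
    have hppos : 0 < pp := by
      have hgpos : 0 < g := hg0.lt_of_ne (Ne.symm hgne)
      linarith
    have hqqpos : 0 < qq := by
      apply pos_of_mul_pos_left' _ hppos
      rw [hpqprod]; positivity
    have hcoppq : IsCoprime pp qq := by
      apply no_prime_divisor_coprime
      intro r hr hr1 hr2
      have hrZ : Prime (r:ℤ) := Int.prime_iff_natAbs_prime.mpr (by simpa using hr)
      have hrh : (r:ℤ) ∣ h := hsum2 ▸ dvd_add hr1 hr2
      have hrg : (r:ℤ) ∣ g := hdiff2 ▸ dvd_sub hr1 hr2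
      have hrne2 : r ≠ 2 := by
        rintro rfl
        exact (Int.not_odd_iff_even.mpr (even_iff_two_dvd.mpr (by exact_mod_cast hrg))) hgodd
      have hru : (r:ℤ) ∣ u := by
        have hr4u : (r:ℤ) ∣ 4*u^2 := by
          have : (4:ℤ)*u^2 = h^2 - g^2 := by linear_combination hh - hg
          rw [this]; exact dvd_sub (hrh.pow two_ne_zero) (hrg.pow two_ne_zero)
        rcases hrZ.dvd_mul.mp hr4u with h' | h'
        · exfalso
          have : (r:ℤ) ∣ 2 := hrZ.dvd_of_dvd_pow (show (r:ℤ) ∣ 2^2 by norm_num; exact h')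
          have : (r:ℤ) ≤ 2 := Int.le_of_dvd (by norm_num) this
          have := hr.two_le
          have : r = 2 := by omega
          exact hrne2 this
        · exact hrZ.dvd_of_dvd_pow h'
      have hrv : (r:ℤ) ∣ v := by
        apply hrZ.dvd_of_dvd_pow (n := 2)
        have : v^2 = g^2 + u^2 := by linear_combination hg
        rw [this]; exact dvd_add (hrg.pow two_ne_zero) (hru.pow two_ne_zero)
      exact coprime_no_prime hcopuv hr hru hrv
    obtain ⟨P, hP0, hP⟩ := sq_of_coprime_pos hcoppq hpqprod hppos.le
    obtain ⟨Q, hQ0, hQ⟩ := sq_of_coprime_pos hcoppq.symm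
      (by rw [mul_comm]; exact hpqprod) hqqpos.le
    have hfinal : P^4 - P^2*Q^2 + Q^4 = v^2 := by
      have h4v : 4*v^2 = h^2 + 3*g^2 := by linear_combination hh + 3*hg
      rw [← hsum2, ← hdiff2, hP, hQ] at h4v
      have : (4:ℤ)*(P^4 - P^2*Q^2 + Q^4) = 4*v^2 := by linear_combination -h4v
      exact (mul_left_cancel₀ (by norm_num : (4:ℤ) ≠ 0) this)
    have hPne : P ≠ 0 := by intro h'; rw [h'] at hP; simp at hP; omega
    have hQne : Q ≠ 0 := by intro h'; rw [h'] at hQ; simp at hQ; omega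
    have hPQne : P^2 ≠ Q^2 := by
      intro h'
      apply hgne
      rw [← hdiff2, hP, hQ, h']; ring
    have hcopPQ : IsCoprime P Q := by
      apply coprime_of_pow (m := 2) (n := 2) (by norm_num) (by norm_num)
      rw [← hP, ← hQ]; exact hcoppq
    refine ⟨P, Q, v, hcopPQ, hfinal, hPne, hQne, hPQne, ?_⟩
    -- size: |v| < w
    have hwval : w = 3*u^4 + v^4 := by linear_combination -hsum + 3*hu + hv
    have hu2 : 1 ≤ u^2 := by
      have h0 : 0 < u^2 := by positivity
      linarith [Int.lt_iff_add_one_le.mp h0]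
    have hu4 : 1 ≤ u^4 := by
      have h0 : 0 < u^4 := by positivity
      linarith [Int.lt_iff_add_one_le.mp h0]
    have hv1 : 1 ≤ |v| := Int.one_le_abs (by exact hvne)
    have hvabs : |v| ≤ v^4 := by
      have h1 : |v| ≤ |v|^4 := le_self_pow₀ hv1 (by norm_num)
      have h2 : |v|^4 = v^4 := by
        rw [pow_abs, abs_of_nonneg (by positivity : (0:ℤ) ≤ v^4)]
      linarith
    have hlt : |v| < w := by linarith
    have : (v.natAbs : ℤ) < (w.natAbs : ℤ) := by
      rw [Int.natCast_natAbs, Int.natCast_natAbs, abs_of_pos hw]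
      exact hlt
    exact_mod_cast this
  · -- Branch: 3 ∣ β ; impossible mod 4
    exfalso
    obtain ⟨β', rfl⟩ := h3β
    have hprod' : α * β' = c^4 := by
      have h3' : (3:ℤ) * (α * β') = 3 * c^4 := by linear_combination hprod
      exact mul_left_cancel₀ (by norm_num) h3'
    have hcop' : IsCoprime α β' := hcαβ.of_isCoprime_of_dvd_right ⟨3, by ring⟩
    have hβ'pos : 0 < β' := by linarith
    obtain ⟨v, hv0, hv⟩ := pow4_of_coprime hcop' hprod' hαpos.le
    obtain ⟨u, hu0, hu⟩ := pow4_of_coprime hcop'.symm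
      (by rw [mul_comm]; exact hprod') hβ'pos.le
    have hune : u ≠ 0 := by intro h'; rw [h'] at hu; simp at hu; omega
    have hvne : v ≠ 0 := by intro h'; rw [h'] at hv; simp at hv; omega
    have hcopuv : IsCoprime v u := by
      apply coprime_of_pow (m := 4) (n := 4) (by norm_num) (by norm_num)
      rw [← hu, ← hv]; exact hcop'
    have hc2 : c^2 = u^2 * v^2 := by
      have h44 : (u^2*v^2)^2 = (c^2)^2 := by
        rw [hu, hv] at hprod'; linear_combination hprod'
      rcases eq_or_eq_neg_of_sq_eq_sq _ _ h44 with h | h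
      · exact h.symm
      · exfalso
        have h1 : (0:ℤ) ≤ u^2*v^2 := by positivity
        have h2 : (0:ℤ) < c^2 := by positivity
        linarith
    have hsfact : x^2 = (u^2 + v^2) * (3*u^2 - v^2) := by
      linear_combination hdiff + 3*hu - hv + 2*hc2
    -- u, v have opposite parity
    have hoppar : Odd (u^2 + v^2) := by
      rcases Int.even_or_odd u with heu | hou <;> rcases Int.even_or_odd v with hev | hov
      · exfalso
        exact coprime_no_prime hcopuv Nat.prime_two
          (by exact_mod_cast even_iff_two_dvd.mp hev) (by exact_mod_cast even_iff_two_dvd.mp heu)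
      · exact (even_sq_of_even heu).add_odd (hov.pow)
      · exact (hou.pow).add_even (even_sq_of_even hev)
      · exfalso
        apply Int.not_odd_iff_even.mpr _ how
        have hwval : w = v^4 + 3*u^4 := by linear_combination -hsum + 3*hu + hv
        rw [hwval]
        exact (hov.pow).add_odd ((by decide : Odd (3:ℤ)).mul (hou.pow))
    have hoddx2 : Odd (x^2) := hox.pow
    have hodd_fact : Odd (u^2 + v^2) ∧ Odd (3*u^2 - v^2) := by
      rw [hsfact] at hoddx2
      exact (Int.odd_mul.mp hoddx2)
    have hcopf : IsCoprime (u^2 + v^2) (3*u^2 - v^2) := by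
      apply no_prime_divisor_coprime
      intro p hp hp1 hp2
      have hpZ : Prime (p:ℤ) := Int.prime_iff_natAbs_prime.mpr (by simpa using hp)
      have hp4v : (p:ℤ) ∣ 4*v^2 := by
        have : (4:ℤ)*v^2 = 3*(u^2 + v^2) - (3*u^2 - v^2) := by ring
        rw [this]; exact dvd_sub (hp1.mul_left 3) hp2
      have hpne2 : p ≠ 2 := by
        rintro rfl
        exact (Int.not_odd_iff_even.mpr (even_iff_two_dvd.mpr (by exact_mod_cast hp1)))
          hodd_fact.1
      have hpv : (p:ℤ) ∣ v := by
        rcases hpZ.dvd_mul.mp hp4v with h' | h'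
        · exfalso
          have : (p:ℤ) ∣ 2 := hpZ.dvd_of_dvd_pow (show (p:ℤ) ∣ 2^2 by norm_num; exact h')
          have : (p:ℤ) ≤ 2 := Int.le_of_dvd (by norm_num) this
          have := hp.two_le
          have : p = 2 := by omega
          exact hpne2 this
        · exact hpZ.dvd_of_dvd_pow h'
      have hpu : (p:ℤ) ∣ u := by
        apply hpZ.dvd_of_dvd_pow (n := 2)
        have : u^2 = (u^2 + v^2) - v^2 := by ring
        rw [this]; exact dvd_sub hp1 (hpv.pow two_ne_zero)
      exact coprime_no_prime hcopuv hp hpv hpu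
    have hx2pos : (0:ℤ) < x^2 := by positivity
    have hf1 : (0:ℤ) < u^2 + v^2 := by positivity
    have hf2 : (0:ℤ) < 3*u^2 - v^2 := by
      apply pos_of_mul_pos_left' _ hf1
      rw [← hsfact]; exact hx2pos
    obtain ⟨g, hg0, hg⟩ := sq_of_coprime_pos hcopf hsfact.symm hf1.le
    obtain ⟨h, hh0, hh⟩ := sq_of_coprime_pos hcopf.symm
      (by rw [mul_comm]; exact hsfact.symm) hf2.le
    have hgodd : Odd g := odd_of_odd_sq (hg ▸ hoppar)
    -- h^2 = 4u^2 - g^2 with g odd: impossible mod 4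
    obtain ⟨r, hr⟩ := hgodd
    have hid : h^2 = 4*u^2 - g^2 := by linear_combination -hh - hg
    have hcast := congrArg (fun t : ℤ => (t : ZMod 4)) hid
    push_cast at hcast
    rw [show ((g:ℤ) : ZMod 4) = 2*(r:ℤ) + 1 by exact_mod_cast congrArg (fun t : ℤ => (t : ZMod 4)) hr] at hcast
    exact (by decide : ∀ a b t : ZMod 4, a^2 = 4*b^2 - (2*t+1)^2 → False) _ _ _ hcast

set_option maxHeartbeats 1000000 in
private lemma quartic_only_trivial : ∀ N : ℕ, ∀ x y w : ℤ, w.natAbs ≤ N → IsCoprime x y →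
    x^4 - x^2*y^2 + y^4 = w^2 → x = 0 ∨ y = 0 ∨ x^2 = y^2 := by
  intro N
  induction N using Nat.strong_induction_on with
  | _ N IH =>
    intro x y w hwN hco heq
    by_contra hcon
    push_neg at hcon
    obtain ⟨hx, hy, hxy⟩ := hcon
    -- replace w by |w|
    set w' := |w| with hw'def
    have heq' : x^4 - x^2*y^2 + y^4 = w'^2 := by rw [hw'def, sq_abs]; exact heq
    have hw'N : w'.natAbs ≤ N := by rwa [hw'def, Int.natAbs_abs]
    have hw'nonneg : 0 ≤ w' := abs_nonneg w
    have hw'pos : 0 < w' := by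
      rcases hw'nonneg.lt_or_eq with h | h
      · exact h
      · exfalso
        rw [← h] at heq'
        have h0 : (x^2-y^2)^2 + (x*y)^2 = 0 := by linear_combination heq'
        have h1 : (x*y)^2 ≤ 0 := by linarith [sq_nonneg (x^2-y^2)]
        have h2 : (x*y)^2 = 0 := le_antisymm h1 (sq_nonneg _)
        have h3 : x*y = 0 := sq_eq_zero_iff.mp h2
        rcases mul_eq_zero.mp h3 with h' | h'
        · exact hx h'
        · exact hy h'
    have hnatlt : ∀ v : ℤ, |v| < w' → v.natAbs < N := by
      intro v hv
      have h1 : (v.natAbs : ℤ) < (w'.natAbs : ℤ) := by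
        rw [Int.natCast_natAbs, Int.natCast_natAbs, abs_of_pos hw'pos]
        exact hv
      have h2 : v.natAbs < w'.natAbs := by exact_mod_cast h1
      omega
    rcases Int.even_or_odd x with hex | hox <;> rcases Int.even_or_odd y with hey | hoy
    · -- both even: impossible
      exact coprime_no_prime hco Nat.prime_two
        (by exact_mod_cast even_iff_two_dvd.mp hex) (by exact_mod_cast even_iff_two_dvd.mp hey)
    · -- x even, y odd: use mixed descent with roles swapped
      obtain ⟨P, Q, v, hcPQ, hfin, hP, hQ, hPQ, hvlt⟩ :=
        mixed_descent hco.symm (by linear_combination heq' : y^4 - y^2*x^2 + x^4 = w'^2)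
          hoy hex hy hx hw'pos
      have hvN : v.natAbs < N := by
        have := hvlt
        omega
      rcases IH v.natAbs hvN P Q v le_rfl hcPQ hfin with h | h | h
      · exact hP h
      · exact hQ h
      · exact hPQ h
    · -- x odd, y even
      obtain ⟨P, Q, v, hcPQ, hfin, hP, hQ, hPQ, hvlt⟩ :=
        mixed_descent hco heq' hox hey hx hy hw'pos
      have hvN : v.natAbs < N := by omega
      rcases IH v.natAbs hvN P Q v le_rfl hcPQ hfin with h | h | h
      · exact hP h
      · exact hQ h
      · exact hPQ h
    · -- both odd: Pythagorean classification descent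
      have hPT : PythagoreanTriple (x*y) (x^2-y^2) w' := by
        have : (x*y)*(x*y) + (x^2-y^2)*(x^2-y^2) = w'*w' := by linear_combination heq'
        exact this
      have hcopA : IsCoprime (x*y) (x^2-y^2) := by
        apply no_prime_divisor_coprime
        intro p hp hp1 hp2
        have hpZ : Prime (p:ℤ) := Int.prime_iff_natAbs_prime.mpr (by simpa using hp)
        rcases hpZ.dvd_mul.mp hp1 with h' | h'
        · have hpy : (p:ℤ) ∣ y := by
            apply hpZ.dvd_of_dvd_pow (n := 2)
            have : y^2 = x^2 - (x^2 - y^2) := by ring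
            rw [this]; exact dvd_sub ((h'.pow two_ne_zero)) hp2
          exact coprime_no_prime hco hp h' hpy
        · have hpx : (p:ℤ) ∣ x := by
            apply hpZ.dvd_of_dvd_pow (n := 2)
            have : x^2 = (x^2 - y^2) + y^2 := by ring
            rw [this]; exact dvd_add hp2 ((h'.pow two_ne_zero))
          exact coprime_no_prime hco hp hpx h'
      have hgcd : Int.gcd (x*y) (x^2-y^2) = 1 := Int.isCoprime_iff_gcd_eq_one.mp hcopA
      obtain ⟨m, n, hmn, hwz, hgcdmn, hpar⟩ :=
        PythagoreanTriple.coprime_classification.mp ⟨hPT, hgcd⟩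
      rcases hmn with ⟨hB, hA⟩ | ⟨hB, hA⟩
      swap
      · -- x*y = 2*m*n : impossible since x*y is odd
        exfalso
        have hoddB : Odd (x*y) := hox.mul hoy
        rw [hB] at hoddB
        exact (Int.not_odd_iff_even.mpr ⟨m*n, by ring⟩) hoddB
      have hw'val : w' = m^2 + n^2 := by
        rcases hwz with h' | h'
        · exact h'
        · exfalso
          have : (0:ℤ) ≤ m^2 + n^2 := by positivity
          linarith
      obtain ⟨k, hk⟩ : ∃ k, x^2 + y^2 = 2*k := by
        obtain ⟨r, hr⟩ := (hox.pow (n := 2)).add_odd (hoy.pow (n := 2))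
        exact ⟨r, by omega⟩
      have hk2 : k^2 = m^4 - m^2*n^2 + n^4 := by
        have e1 : (x^2+y^2)^2 = (2*m*n)^2 + 4*(m^2-n^2)^2 := by
          rw [← hA, ← hB]; ring
        rw [hk] at e1
        have h4 : (4:ℤ)*(k^2) = 4*(m^4 - m^2*n^2 + n^4) := by linear_combination e1
        exact mul_left_cancel₀ (by norm_num) h4
      have hm0 : m ≠ 0 := by
        intro h'
        apply hxy
        have : x^2 - y^2 = 0 := by rw [hA, h']; ring
        linarith
      have hn0 : n ≠ 0 := by
        intro h'
        apply hxy
        have : x^2 - y^2 = 0 := by rw [hA, h']; ring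
        linarith
      have hkpos : 0 < k := by
        have h1 : (0:ℤ) < x^2 + y^2 := by positivity
        linarith
      have hklt : |k| < w' := by
        rw [abs_of_pos hkpos]
        have hmn1 : 1 ≤ m^2 * n^2 := by
          have h0 : 0 < m^2 * n^2 := by positivity
          linarith [Int.lt_iff_add_one_le.mp h0]
        have hsq : k^2 < w'^2 := by
          rw [hk2, hw'val]; nlinarith [hmn1]
        exact lt_of_pow_lt_pow_left₀ 2 hw'pos.le hsq
      rcases IH k.natAbs (hnatlt k hklt) m n k le_rfl
        (Int.isCoprime_iff_gcd_eq_one.mpr hgcdmn) hk2.symm with h | h | h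
      · exact hm0 h
      · exact hn0 h
      · -- m^2 = n^2 gives x*y = 0
        have : x*y = 0 := by rw [hB, h]; ring
        rcases mul_eq_zero.mp this with h' | h'
        · exact hx h'
        · exact hy h'

private lemma even_pow6 {a : ℤ} (h : Even a) : Even (a^6) := by
  obtain ⟨r, rfl⟩ := h; exact ⟨2^5*r^6, by ring⟩

set_option maxHeartbeats 1000000 in
private lemma sextic_eq {a b d : ℤ} (hco : IsCoprime a b) (heq : a^6 + b^6 = 2*d^2) :
    a^2 = 1 ∧ b^2 = 1 := by
  have heven2d : Even (2*d^2) := ⟨d^2, by ring⟩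
  obtain ⟨hoa, hob⟩ : Odd a ∧ Odd b := by
    rcases Int.even_or_odd a with hea | hoa <;> rcases Int.even_or_odd b with heb | hob
    · exact (coprime_no_prime hco Nat.prime_two
        (by exact_mod_cast even_iff_two_dvd.mp hea)
        (by exact_mod_cast even_iff_two_dvd.mp heb)).elim
    · exfalso
      have h1 : Odd (a^6 + b^6) := (even_pow6 hea).add_odd (hob.pow)
      rw [heq] at h1
      exact (Int.not_odd_iff_even.mpr heven2d) h1
    · exfalso
      have h1 : Odd (a^6 + b^6) := (hoa.pow).add_even (even_pow6 heb)
      rw [heq] at h1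
      exact (Int.not_odd_iff_even.mpr heven2d) h1
    · exact ⟨hoa, hob⟩
  have ha0 : a ≠ 0 := by rintro rfl; exact (by decide : ¬ Odd (0:ℤ)) hoa
  have hb0 : b ≠ 0 := by rintro rfl; exact (by decide : ¬ Odd (0:ℤ)) hob
  obtain ⟨k, hk⟩ : ∃ k, a^2 + b^2 = 2*k := by
    obtain ⟨r, hr⟩ := (hoa.pow (n := 2)).add_odd (hob.pow (n := 2))
    exact ⟨r, by omega⟩
  have hfac : d^2 = k * (a^4 - a^2*b^2 + b^4) := by
    have h2 : (2:ℤ)*(d^2) = 2*(k * (a^4 - a^2*b^2 + b^4)) := by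
      linear_combination -heq + (a^4 - a^2*b^2 + b^4) * hk
    exact mul_left_cancel₀ (by norm_num) h2
  have hkodd : Odd k := by
    obtain ⟨i, hi⟩ := hoa
    obtain ⟨j, hj⟩ := hob
    refine ⟨i^2 + i + j^2 + j, ?_⟩
    have h2 : 2*k = 2*(2*(i^2+i+j^2+j)+1) := by rw [← hk, hi, hj]; ring
    linarith
  have hcop : IsCoprime k (a^4 - a^2*b^2 + b^4) := by
    apply no_prime_divisor_coprime
    intro p hp hp1 hp2
    have hpZ : Prime (p:ℤ) := Int.prime_iff_natAbs_prime.mpr (by simpa using hp)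
    have hpne2 : p ≠ 2 := by
      rintro rfl
      exact (Int.not_odd_iff_even.mpr (even_iff_two_dvd.mpr (by exact_mod_cast hp1))) hkodd
    have hid : 3*(a*b)^2 = 4*k^2 - (a^4 - a^2*b^2 + b^4) := by
      linear_combination (a^2 + b^2 + 2*k) * hk
    have hpd : (p:ℤ) ∣ 3*(a*b)^2 := by
      rw [hid]; exact dvd_sub ((hp1.pow two_ne_zero).mul_left 4) hp2
    rcases hpZ.dvd_mul.mp hpd with h3 | hab
    · have hp3 : p = 3 :=
        (Nat.prime_dvd_prime_iff_eq hp Nat.prime_three).mp (by exact_mod_cast h3)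
      subst hp3
      have h3ab : (3:ℤ) ∣ a^2 + b^2 := by
        rw [hk]; exact Dvd.dvd.mul_left (by exact_mod_cast hp1) 2
      have h0 : ((a^2 + b^2 : ℤ) : ZMod 3) = 0 := by
        exact_mod_cast (ZMod.intCast_zmod_eq_zero_iff_dvd _ 3).mpr h3ab
      push_cast at h0
      have key : ∀ u v : ZMod 3, u^2 + v^2 = 0 → u = 0 ∧ v = 0 := by decide
      obtain ⟨ha3, hb3⟩ := key _ _ h0
      exact coprime_no_prime hco (by norm_num : Nat.Prime 3)
        (by exact_mod_cast (ZMod.intCast_zmod_eq_zero_iff_dvd a 3).mp ha3)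
        (by exact_mod_cast (ZMod.intCast_zmod_eq_zero_iff_dvd b 3).mp hb3)
    · have hpab := hpZ.dvd_of_dvd_pow hab
      rcases hpZ.dvd_mul.mp hpab with ha' | hb'
      · have hpb : (p:ℤ) ∣ b := by
          apply hpZ.dvd_of_dvd_pow (n := 2)
          have hid2 : b^2 = 2*k - a^2 := by linear_combination hk
          rw [hid2]; exact dvd_sub (hp1.mul_left 2) (ha'.pow two_ne_zero)
        exact coprime_no_prime hco hp ha' hpb
      · have hpa : (p:ℤ) ∣ a := by
          apply hpZ.dvd_of_dvd_pow (n := 2)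
          have hid2 : a^2 = 2*k - b^2 := by linear_combination hk
          rw [hid2]; exact dvd_sub (hp1.mul_left 2) (hb'.pow two_ne_zero)
        exact coprime_no_prime hco hp hpa hb'
  have hqpos : 0 < a^4 - a^2*b^2 + b^4 := by
    have h1 : (a*b)^2 ≠ 0 := pow_ne_zero _ (mul_ne_zero ha0 hb0)
    have h2 : 0 < (a*b)^2 := (sq_nonneg _).lt_of_ne (Ne.symm h1)
    have h3 : a^4 - a^2*b^2 + b^4 = (a^2-b^2)^2 + (a*b)^2 := by ring
    rw [h3]
    have := sq_nonneg (a^2 - b^2)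
    linarith
  obtain ⟨t, ht0, ht⟩ := sq_of_coprime_pos hcop.symm
    (by rw [mul_comm]; exact hfac.symm) hqpos.le
  rcases quartic_only_trivial t.natAbs a b t le_rfl hco ht with h | h | h
  · exact absurd h ha0
  · exact absurd h hb0
  · -- a^2 = b^2, coprime ⇒ both 1
    have hcop2 : IsCoprime (a^2) (b^2) := hco.pow
    rw [h] at hcop2
    have hunit : IsUnit (b^2) := isCoprime_self.mp hcop2
    rw [Int.isUnit_iff] at hunit
    rcases hunit with h' | h'
    · exact ⟨by rw [h, h'], h'⟩
    · exfalso; have := sq_nonneg b; omega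

/-- The only rational points on the affine curve `y² = 2x⁶ + 2` are
`(1, 2)`, `(1, -2)`, `(-1, 2)`, and `(-1, -2)`. -/
theorem rational_points_of_genus_two_curve_three (x y : ℚ) :
    y ^ 2 = 2 * x ^ 6 + 2 ↔ (x = 1 ∨ x = -1) ∧ (y = 2 ∨ y = -2) := by
  constructor
  · intro h
    obtain ⟨a, b, hbpos, hx', hcoab⟩ :
        ∃ a b : ℤ, 0 < b ∧ x = (a:ℚ)/(b:ℚ) ∧ IsCoprime a b := by
      refine ⟨x.num, (x.den : ℤ), by exact_mod_cast x.pos, ?_, ?_⟩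
      · rw [eq_comm]
        exact_mod_cast x.num_div_den
      · rw [Int.isCoprime_iff_gcd_eq_one]
        simpa [Int.gcd] using x.reduced
    obtain ⟨p, q, hqpos, hy', hcopq⟩ :
        ∃ p q : ℤ, 0 < q ∧ y = (p:ℚ)/(q:ℚ) ∧ IsCoprime p q := by
      refine ⟨y.num, (y.den : ℤ), by exact_mod_cast y.pos, ?_, ?_⟩
      · rw [eq_comm]
        exact_mod_cast y.num_div_den
      · rw [Int.isCoprime_iff_gcd_eq_one]
        simpa [Int.gcd] using y.reduced
    have hb0 : (b:ℚ) ≠ 0 := by exact_mod_cast hbpos.ne'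
    have hq0 : (q:ℚ) ≠ 0 := by exact_mod_cast hqpos.ne'
    have hbZ0 : b ≠ 0 := hbpos.ne'
    have hqZ0 : q ≠ 0 := hqpos.ne'
    rw [hx', hy'] at h
    field_simp at h
    have hZ : p^2 * b^6 = (2*a^6 + 2*b^6) * q^2 := by
      linear_combination (by exact_mod_cast h : p^2 * b^6 = q^2 * 2 * (a^6 + b^6))
    -- q divides b^3
    have hq2b6 : q^2 ∣ b^6 := by
      have hdvd : q^2 ∣ p^2 * b^6 := ⟨2*a^6 + 2*b^6, by linarith [hZ]⟩
      exact (hcopq.symm.pow (m := 2) (n := 2)).dvd_of_dvd_mul_left hdvd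
    have hqb3 : q ∣ b^3 := by
      have : q^2 ∣ (b^3)^2 := by
        have e : (b^3)^2 = b^6 := by ring
        rw [e]; exact hq2b6
      exact (Int.pow_dvd_pow_iff two_ne_zero).mp this
    obtain ⟨c, hc⟩ := hqb3
    have he : (p*c)^2 = 2*a^6 + 2*b^6 := by
      have h2 : q^2 * ((p*c)^2) = q^2 * (2*a^6 + 2*b^6) := by
        linear_combination hZ - p^2*(b^3 + q*c)*hc
      exact mul_left_cancel₀ (pow_ne_zero 2 hqZ0) h2
    obtain ⟨d, hd⟩ : Even (p*c) := by
      rcases Int.even_or_odd (p*c) with h' | h'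
      · exact h'
      · exfalso
        have h1 : Odd ((p*c)^2) := h'.pow
        rw [he] at h1
        exact (Int.not_odd_iff_even.mpr ⟨a^6 + b^6, by ring⟩) h1
    have hsex : a^6 + b^6 = 2*d^2 := by
      rw [hd] at he
      have h2 : (2:ℤ)*(a^6 + b^6) = 2*(2*d^2) := by linear_combination -he
      exact mul_left_cancel₀ (by norm_num) h2
    obtain ⟨ha2, hb2⟩ := sextic_eq hcoab hsex
    have hb1 : b = 1 := by
      have h' : (b-1)*(b+1) = 0 := by linear_combination hb2
      rcases mul_eq_zero.mp h' with h'' | h''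
      · omega
      · omega
    have ha1 : a = 1 ∨ a = -1 := by
      have h' : (a-1)*(a+1) = 0 := by linear_combination ha2
      rcases mul_eq_zero.mp h' with h'' | h''
      · left; omega
      · right; omega
    have hxval : x = 1 ∨ x = -1 := by
      rw [hx', hb1]
      rcases ha1 with h' | h' <;> rw [h'] <;> norm_num
    refine ⟨hxval, ?_⟩
    have hb1Q : (b:ℚ) = 1 := by exact_mod_cast hb1
    have ha6 : (a:ℚ)^6 = 1 := by
      rcases ha1 with h' | h' <;> rw [h'] <;> norm_num
    have h4 : (p:ℚ)^2 = 4*q^2 := by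
      rw [hb1Q, ha6] at h; linarith
    have hy4 : y^2 = 4 := by
      rw [hy']
      field_simp
      linear_combination h4
    have h' : (y-2)*(y+2) = 0 := by linear_combination hy4
    rcases mul_eq_zero.mp h' with h'' | h''
    · left; linarith [h'']
    · right; linarith [h'']
  · rintro ⟨hx | hx, hy | hy⟩ <;> subst hx <;> subst hy <;> norm_num
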